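/- arXiv:1707.05095 — 10 statements merged into one kernel-verified Lean document; each statement's English description precedes it below -/
import Mathlib

section
/- Let A, B be n×n W-bounded-difference integer matrices, let C = A ⋆ B, let Δ ≥ 1 divide n, and define the approximation matrix tildeC by tildeC_{i,j} := min{ A_{r(i),k'} + B_{k',r(j)} : k' ∈ {Δ, 2Δ, …, n} }, where r(i) denotes the unique multiple of Δ with i ∈ I(r(i)). Then for all i, j ∈ {1,…,n}, |C_{i,j} − tildeC_{i,j}| ≤ 4ΔW. -/
/-- The `(min,+)`-product of two `n × n` integer matrices (indexed by `1,…,n`). -/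
def minplus (n : ℕ) (hn : 1 ≤ n) (A B : ℕ → ℕ → ℤ) (i j : ℕ) : ℤ :=
  (Finset.Icc 1 n).inf' (Finset.nonempty_Icc.mpr hn) (fun k => A i k + B k j)

/-- An `n × n` integer matrix `X` is `W`-bounded-difference. -/
def BoundedDiff (n : ℕ) (W : ℤ) (X : ℕ → ℕ → ℤ) : Prop :=
  (∀ i j, 1 ≤ i → i ≤ n → 1 ≤ j → j < n → |X i j - X i (j + 1)| ≤ W) ∧
  (∀ i j, 1 ≤ i → i < n → 1 ≤ j → j ≤ n → |X i j - X (i + 1) j| ≤ W)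

lemma lip_row (n : ℕ) (W : ℤ) (X : ℕ → ℕ → ℤ) (hX : BoundedDiff n W X)
    (i : ℕ) (hi1 : 1 ≤ i) (hi2 : i ≤ n) :
    ∀ j j', 1 ≤ j → j ≤ j' → j' ≤ n → |X i j - X i j'| ≤ W * ((j' : ℤ) - j) := by
  intro j j' hj hjj
  induction j', hjj using Nat.le_induction with
  | base => intro _; simp
  | succ m hm ih =>
    intro hm1
    have h1 : m ≤ n := by omega
    have hprev := ih h1
    have h2 := hX.1 i m hi1 hi2 (by omega) (by omega)
    calc |X i j - X i (m+1)| ≤ |X i j - X i m| + |X i m - X i (m+1)| := abs_sub_le _ _ _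
      _ ≤ W * ((m : ℤ) - j) + W := add_le_add hprev h2
      _ = W * (((m+1 : ℕ) : ℤ) - j) := by push_cast; ring

lemma lip_col (n : ℕ) (W : ℤ) (X : ℕ → ℕ → ℤ) (hX : BoundedDiff n W X)
    (j : ℕ) (hj1 : 1 ≤ j) (hj2 : j ≤ n) :
    ∀ i i', 1 ≤ i → i ≤ i' → i' ≤ n → |X i j - X i' j| ≤ W * ((i' : ℤ) - i) := by
  intro i i' hi hii
  induction i', hii using Nat.le_induction with
  | base => intro _; simp
  | succ m hm ih =>
    intro hm1
    have h1 : m ≤ n := by omega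
    have hprev := ih h1
    have h2 := hX.2 m j (by omega) (by omega) hj1 hj2
    calc |X i j - X (m+1) j| ≤ |X i j - X m j| + |X m j - X (m+1) j| := abs_sub_le _ _ _
      _ ≤ W * ((m : ℤ) - i) + W := add_le_add hprev h2
      _ = W * (((m+1 : ℕ) : ℤ) - i) := by push_cast; ring

/-- For `W`-BD matrices `A, B`, `C = A ⋆ B`, `Δ ∣ n`, and the approximation
`tildeC_{i,j} = min { A_{r(i),k'} + B_{k',r(j)} : k' ∈ {Δ, 2Δ, …, n} }`,
where `r(i)` is the unique multiple of `Δ` with `i ∈ I(r(i))`, we have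
`|C_{i,j} - tildeC_{i,j}| ≤ 4ΔW` for all `i, j ∈ {1,…,n}`. -/
theorem approx_error (n Δ : ℕ) (hn : 1 ≤ n) (hΔ : 1 ≤ Δ) (hdvd : Δ ∣ n)
    (W : ℤ) (hW : 0 ≤ W) (A B : ℕ → ℕ → ℤ)
    (hA : BoundedDiff n W A) (hB : BoundedDiff n W B)
    (r : ℕ → ℕ)
    (hr : ∀ i, 1 ≤ i → i ≤ n → Δ ∣ r i ∧ r i - Δ < i ∧ i ≤ r i ∧ r i ≤ n)
    (hmul : ((Finset.Icc 1 n).filter (fun k => Δ ∣ k)).Nonempty)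
    (tC : ℕ → ℕ → ℤ)
    (htC : ∀ i j, 1 ≤ i → i ≤ n → 1 ≤ j → j ≤ n →
      tC i j = ((Finset.Icc 1 n).filter (fun k => Δ ∣ k)).inf' hmul
        (fun k' => A (r i) k' + B k' (r j))) :
    ∀ i j, 1 ≤ i → i ≤ n → 1 ≤ j → j ≤ n →
      |minplus n hn A B i j - tC i j| ≤ 4 * (Δ : ℤ) * W := by
  intro i j hi1 hi2 hj1 hj2
  obtain ⟨hdri, hriΔ, hri_ge, hri_le⟩ := hr i hi1 hi2
  obtain ⟨hdrj, hrjΔ, hrj_ge, hrj_le⟩ := hr j hj1 hj2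
  have hri1 : 1 ≤ r i := le_trans hi1 hri_ge
  have hrj1 : 1 ≤ r j := le_trans hj1 hrj_ge
  have hriB : (r i : ℤ) - i ≤ (Δ : ℤ) - 1 := by omega
  have hrjB : (r j : ℤ) - j ≤ (Δ : ℤ) - 1 := by omega
  rw [htC i j hi1 hi2 hj1 hj2]
  rw [abs_le]
  constructor
  · -- tC ≤ C + 4ΔW : take minimizer k of C, use k' = r k
    obtain ⟨k, hk, hkeq⟩ := Finset.exists_mem_eq_inf' (Finset.nonempty_Icc.mpr hn)
      (fun k => A i k + B k j)
    rw [Finset.mem_Icc] at hk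
    obtain ⟨hdrk, hrkΔ, hrk_ge, hrk_le⟩ := hr k hk.1 hk.2
    have hrk1 : 1 ≤ r k := le_trans hk.1 hrk_ge
    have hrkB : (r k : ℤ) - k ≤ (Δ : ℤ) - 1 := by omega
    have hmem : r k ∈ (Finset.Icc 1 n).filter (fun k => Δ ∣ k) := by
      simp only [Finset.mem_filter, Finset.mem_Icc]
      exact ⟨⟨hrk1, hrk_le⟩, hdrk⟩
    have hle := Finset.inf'_le (fun k' => A (r i) k' + B k' (r j)) hmem
    -- bound A (r i) (r k) against A i k
    have hA1 := abs_le.mp (lip_col n W A hA (r k) hrk1 hrk_le i (r i) hi1 hri_ge hri_le)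
    have hA2 := abs_le.mp (lip_row n W A hA i hi1 hi2 k (r k) hk.1 hrk_ge hrk_le)
    have hB1 := abs_le.mp (lip_col n W B hB (r j) hrj1 hrj_le k (r k) hk.1 hrk_ge hrk_le)
    have hB2 := abs_le.mp (lip_row n W B hB k hk.1 hk.2 j (r j) hj1 hrj_ge hrj_le)
    have hCeq : minplus n hn A B i j = A i k + B k j := hkeq
    rw [hCeq]
    have e1 : W * ((r i : ℤ) - i) ≤ W * ((Δ : ℤ) - 1) := by
      apply mul_le_mul_of_nonneg_left hriB hW
    have e2 : W * ((r k : ℤ) - k) ≤ W * ((Δ : ℤ) - 1) := by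
      apply mul_le_mul_of_nonneg_left hrkB hW
    have e3 : W * ((r j : ℤ) - j) ≤ W * ((Δ : ℤ) - 1) := by
      apply mul_le_mul_of_nonneg_left hrjB hW
    have hΔ' : (1 : ℤ) ≤ (Δ : ℤ) := by exact_mod_cast hΔ
    linarith [hA1.1, hA1.2, hA2.1, hA2.2, hB1.1, hB1.2, hB2.1, hB2.2, hle, e1, e2, e3]
  · -- C ≤ tC + 4ΔW : take minimizer k' of tC
    obtain ⟨k', hk', hkeq'⟩ := Finset.exists_mem_eq_inf' hmul
      (fun k' => A (r i) k' + B k' (r j))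
    simp only [Finset.mem_filter, Finset.mem_Icc] at hk'
    have hmem : k' ∈ Finset.Icc 1 n := Finset.mem_Icc.mpr hk'.1
    have hle : minplus n hn A B i j ≤ A i k' + B k' j :=
      Finset.inf'_le (fun k => A i k + B k j) hmem
    have hA1 := abs_le.mp (lip_col n W A hA k' hk'.1.1 hk'.1.2 i (r i) hi1 hri_ge hri_le)
    have hB1 := abs_le.mp (lip_row n W B hB k' hk'.1.1 hk'.1.2 j (r j) hj1 hrj_ge hrj_le)
    rw [hkeq']
    have e1 : W * ((r i : ℤ) - i) ≤ W * ((Δ : ℤ) - 1) := by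
      apply mul_le_mul_of_nonneg_left hriB hW
    have e3 : W * ((r j : ℤ) - j) ≤ W * ((Δ : ℤ) - 1) := by
      apply mul_le_mul_of_nonneg_left hrjB hW
    have hΔ' : (1 : ℤ) ≤ (Δ : ℤ) := by exact_mod_cast hΔ
    linarith [hA1.1, hA1.2, hB1.1, hB1.2, hle, e1, e3]
end

section
/- Let A, B be n×n integer matrices, C = A ⋆ B, and let tildeC be an n×n integer matrix satisfying |C_{x,y} − tildeC_{x,y}| ≤ 4D for all x,y, where D ≥ 0 is an integer. Fix indices i, k, j, i^r, j^r ∈ {1,…,n} and define A^r_{i,k} := A_{i,k} + B_{k,j^r} − tildeC_{i,j^r} and B^r_{k,j} := B_{k,j} − B_{k,j^r} + tildeC_{i^r,j^r} − tildeC_{i^r,j}. If the three triples (i,k,j^r), (i^r,k,j^r), (i^r,k,j) are all weakly relevant, i.e., |A_{i,k} + B_{k,j^r} − C_{i,j^r}| ≤ 16D, |A_{i^r,k} + B_{k,j^r} − C_{i^r,j^r}| ≤ 16D, and |A_{i^r,k} + B_{k,j} − C_{i^r,j}| ≤ 16D, then |A^r_{i,k}| ≤ 20D and |B^r_{k,j}|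 ≤ 40D. -/
/-- If `C = A ⋆ B`, `tildeC` is an entrywise additive `4D`-approximation of `C`, and the
triples `(i,k,jʳ)`, `(iʳ,k,jʳ)`, `(iʳ,k,j)` are all weakly relevant (their value is within
`16D` of the corresponding entry of `C`), then the perturbed entries
`Aʳ_{i,k} = A_{i,k} + B_{k,jʳ} - tildeC_{i,jʳ}` and
`Bʳ_{k,j} = B_{k,j} - B_{k,jʳ} + tildeC_{iʳ,jʳ} - tildeC_{iʳ,j}`
satisfy `|Aʳ_{i,k}| ≤ 20D` and `|Bʳ_{k,j}| ≤ 40D`. -/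
theorem perturbed_entries_small (n : ℕ) (hn : 1 ≤ n)
    (A B C tC : ℕ → ℕ → ℤ)
    (hC : ∀ i j, C i j = minplus n hn A B i j)
    (D : ℤ) (hD : 0 ≤ D)
    (happrox : ∀ x y, 1 ≤ x → x ≤ n → 1 ≤ y → y ≤ n → |C x y - tC x y| ≤ 4 * D)
    (i k j ir jr : ℕ)
    (hi : 1 ≤ i ∧ i ≤ n) (hk : 1 ≤ k ∧ k ≤ n) (hj : 1 ≤ j ∧ j ≤ n)
    (hir : 1 ≤ ir ∧ ir ≤ n) (hjr : 1 ≤ jr ∧ jr ≤ n)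
    (Ar Br : ℕ → ℕ → ℤ)
    (hAr : Ar i k = A i k + B k jr - tC i jr)
    (hBr : Br k j = B k j - B k jr + tC ir jr - tC ir j)
    (h1 : |A i k + B k jr - C i jr| ≤ 16 * D)
    (h2 : |A ir k + B k jr - C ir jr| ≤ 16 * D)
    (h3 : |A ir k + B k j - C ir j| ≤ 16 * D) :
    |Ar i k| ≤ 20 * D ∧ |Br k j| ≤ 40 * D := by
  have e1 := happrox i jr hi.1 hi.2 hjr.1 hjr.2
  have e2 := happrox ir jr hir.1 hir.2 hjr.1 hjr.2
  have e3 := happrox ir j hir.1 hir.2 hj.1 hj.2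
  constructor
  · have : Ar i k = (A i k + B k jr - C i jr) + (C i jr - tC i jr) := by
      rw [hAr]; ring
    rw [this]
    calc |(A i k + B k jr - C i jr) + (C i jr - tC i jr)|
        ≤ |A i k + B k jr - C i jr| + |C i jr - tC i jr| := abs_add_le _ _
      _ ≤ 16 * D + 4 * D := add_le_add h1 e1
      _ = 20 * D := by ring
  · have : Br k j = ((A ir k + B k j - C ir j) + -(A ir k + B k jr - C ir jr))
        + (-(C ir jr - tC ir jr) + (C ir j - tC ir j)) := by
      rw [hBr]; ring
    rw [this]
    calc _ ≤ |(A ir k + B k j - C ir j) + -(A ir k + B k jr - C ir jr)|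
        + |(-(C ir jr - tC ir jr)) + (C ir j - tC ir j)| := abs_add_le _ _
      _ ≤ (|A ir k + B k j - C ir j| + |(-(A ir k + B k jr - C ir jr))|)
          + (|(-(C ir jr - tC ir jr))| + |C ir j - tC ir j|) :=
            add_le_add (abs_add_le _ _) (abs_add_le _ _)
      _ ≤ (16 * D + 16 * D) + (4 * D + 4 * D) := by
            rw [abs_neg, abs_neg]
            exact add_le_add (add_le_add h3 h2) (add_le_add e2 e3)
      _ = 40 * D := by ring
end

section
/- Let G = (U ∪ V, E) be a bipartite graph with |U| = |V| = n nodes per partition and |E| = m edges, and let C be the number of 4-cycles of G. If m ≥ 2n^{3/2} (equivalently, m² ≥ 4n³), then C ≥ m⁴/(32n⁴) (equivalently, 32n⁴·C ≥ m⁴). -/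
open Finset

set_option maxHeartbeats 1000000

lemma choose2_id (k : ℕ) : 2 * k.choose 2 + k = k ^ 2 := by
  induction k with
  | zero => simp
  | succ k ih =>
    rw [Nat.choose_succ_succ, Nat.choose_one_right]
    nlinarith [ih]

/-- In a bipartite graph with `n` vertices per side and `m` edges, if `m ≥ 2n^{3/2}`
(equivalently `m² ≥ 4n³`), then the number `C` of 4-cycles satisfies `C ≥ m⁴/(32n⁴)`
(equivalently `32n⁴·C ≥ m⁴`). Here `N v v'` is the number of common neighbors of
`v, v'`, and `C = ∑_{v < v'} binom(N(v,v'), 2)`. -/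
theorem four_cycles_lower_bound (n : ℕ) (E : Finset (Fin n × Fin n))
    (m : ℕ) (hm : m = E.card)
    (N : Fin n → Fin n → ℕ)
    (hN : ∀ v v', N v v' = (univ.filter (fun u : Fin n => (u, v) ∈ E ∧ (u, v') ∈ E)).card)
    (C : ℕ)
    (hC : C = ∑ p ∈ univ.filter (fun p : Fin n × Fin n => p.1 < p.2),
      Nat.choose (N p.1 p.2) 2)
    (hdense : m ^ 2 ≥ 4 * n ^ 3) :
    32 * n ^ 4 * C ≥ m ^ 4 := by
  classical
  rcases Nat.eq_zero_or_pos n with hn | hn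
  · subst hn
    have : E = ∅ := Finset.eq_empty_of_isEmpty E
    simp [hm, this]
  set e : Fin n → Fin n → ℕ := fun u v => if (u, v) ∈ E then 1 else 0 with he
  have he_sq : ∀ u v, e u v * e u v = e u v := by
    intro u v; by_cases h : (u, v) ∈ E <;> simp [he, h]
  set d : Fin n → ℕ := fun u => ∑ v, e u v with hd
  -- m as a double sum of indicators
  have hcard : ∑ p : Fin n × Fin n, (if p ∈ E then (1 : ℕ) else 0) = E.card := by
    rw [Finset.sum_ite_mem, Finset.univ_inter, Finset.card_eq_sum_ones]
  have hm' : m = ∑ u, ∑ v, e u v := by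
    rw [hm, ← hcard, ← Finset.univ_product_univ, Finset.sum_product]
  have hdm : ∑ u, d u = m := hm'.symm
  -- N as a sum of indicators
  have hN' : ∀ v v', N v v' = ∑ u, e u v * e u v' := by
    intro v v'
    rw [hN, Finset.card_filter]
    apply Finset.sum_congr rfl
    intro u _
    by_cases h1 : (u, v) ∈ E <;> by_cases h2 : (u, v') ∈ E <;> simp [he, h1, h2]
  -- total double sum of N
  have hT : ∑ v, ∑ v', N v v' = ∑ u, d u ^ 2 := by
    simp only [hN']
    calc ∑ v, ∑ v', ∑ u, e u v * e u v'
        = ∑ v, ∑ u, ∑ v', e u v * e u v' := by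
          exact Finset.sum_congr rfl fun v _ => Finset.sum_comm
      _ = ∑ u, ∑ v, ∑ v', e u v * e u v' := Finset.sum_comm
      _ = ∑ u, d u ^ 2 := by
          refine Finset.sum_congr rfl fun u _ => ?_
          rw [hd, sq, Finset.sum_mul_sum]
  have hdiag : ∑ v, N v v = m := by
    simp only [hN', he_sq]
    rw [Finset.sum_comm, ← hm']
  have hsymm : ∀ v v', N v v' = N v' v := by
    intro v v'
    simp only [hN']
    exact Finset.sum_congr rfl fun u _ => mul_comm _ _
  set A : Finset (Fin n × Fin n) := univ.filter (fun p : Fin n × Fin n => p.1 < p.2) with hA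
  set B : Finset (Fin n × Fin n) := univ.filter (fun p : Fin n × Fin n => p.2 < p.1) with hB
  set S : ℕ := ∑ p ∈ A, N p.1 p.2 with hS
  -- split the double sum
  have hsplit : ∑ v, ∑ v', N v v' = 2 * S + m := by
    rw [← Finset.sum_product', Finset.univ_product_univ]
    rw [← Finset.sum_filter_add_sum_filter_not univ (fun p : Fin n × Fin n => p.1 < p.2)]
    rw [← Finset.sum_filter_add_sum_filter_not
      (univ.filter (fun p : Fin n × Fin n => ¬ p.1 < p.2)) (fun p => p.2 < p.1)]
    have h1 : (univ.filter (fun p : Fin n × Fin n => ¬ p.1 < p.2)).filter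
        (fun p => p.2 < p.1) = B := by
      rw [Finset.filter_filter, hB]
      apply Finset.filter_congr
      intro p _
      constructor
      · rintro ⟨_, h⟩; exact h
      · intro h; exact ⟨lt_asymm h, h⟩
    have h2 : (univ.filter (fun p : Fin n × Fin n => ¬ p.1 < p.2)).filter
        (fun p => ¬ p.2 < p.1) = univ.filter (fun p : Fin n × Fin n => p.1 = p.2) := by
      rw [Finset.filter_filter]
      apply Finset.filter_congr
      intro p _
      constructor
      · rintro ⟨h1, h2⟩; exact le_antisymm (le_of_not_gt h2) (le_of_not_gt h1)
      · intro h; exact ⟨by simp [h], by simp [h]⟩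
    have h3 : ∑ p ∈ B, N p.1 p.2 = S := by
      rw [hS]
      apply Finset.sum_nbij' (i := Prod.swap) (j := Prod.swap)
      · intro p hp; simp only [hA, hB, Finset.mem_filter, Finset.mem_univ, true_and] at *
        exact hp
      · intro p hp; simp only [hA, hB, Finset.mem_filter, Finset.mem_univ, true_and] at *
        exact hp
      · intro p _; rfl
      · intro p _; rfl
      · intro p _; exact hsymm _ _
    have h4 : ∑ p ∈ univ.filter (fun p : Fin n × Fin n => p.1 = p.2), N p.1 p.2 = m := by
      rw [← hdiag]
      apply Finset.sum_nbij' (i := fun p => p.1) (j := fun v => (v, v))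
      · intro p _; exact Finset.mem_univ _
      · intro v _; simp
      · intro p hp
        simp only [Finset.mem_filter, Finset.mem_univ, true_and] at hp
        exact Prod.ext rfl hp
      · intro v _; rfl
      · intro p hp
        simp only [Finset.mem_filter, Finset.mem_univ, true_and] at hp
        rw [← hp]
    rw [h1, h2, h3, h4,
      show (univ.filter (fun p : Fin n × Fin n => p.1 < p.2)) = A from hA.symm, ← hS]
    omega
  -- Cauchy-Schwarz on degrees
  have hC1 : m ^ 2 ≤ n * (2 * S + m) := by
    calc m ^ 2 = (∑ u, d u) ^ 2 := by rw [hdm]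
      _ ≤ (univ : Finset (Fin n)).card * ∑ u, d u ^ 2 := sq_sum_le_card_mul_sum_sq
      _ = n * (2 * S + m) := by rw [← hT, hsplit, Finset.card_univ, Fintype.card_fin]
  -- Cauchy-Schwarz on common-neighbor counts
  have hQ : ∑ p ∈ A, N p.1 p.2 ^ 2 = 2 * C + S := by
    rw [hC, hS, Finset.mul_sum, ← Finset.sum_add_distrib]
    refine (Finset.sum_congr rfl fun p _ => ?_).symm
    exact choose2_id _
  have hC2 : S ^ 2 ≤ A.card * (2 * C + S) := by
    rw [← hQ, hS]
    exact sq_sum_le_card_mul_sum_sq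
  -- bound on the number of pairs
  have hP : 2 * A.card ≤ n * n := by
    have hAB : A.card = B.card := by
      apply Finset.card_nbij' (i := Prod.swap) (j := Prod.swap)
      · intro p hp; simp only [hA, hB, Finset.mem_coe, Finset.mem_filter, Finset.mem_univ, true_and] at *
        exact hp
      · intro p hp; simp only [hA, hB, Finset.mem_coe, Finset.mem_filter, Finset.mem_univ, true_and] at *
        exact hp
      · intro p _; rfl
      · intro p _; rfl
    have hdisj : Disjoint A B := by
      rw [Finset.disjoint_left]
      intro p hp hp'
      simp only [hA, hB, Finset.mem_filter, Finset.mem_univ, true_and] at hp hp'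
      exact lt_asymm hp hp'
    have : (A ∪ B).card ≤ (univ : Finset (Fin n × Fin n)).card := Finset.card_le_univ _
    rw [Finset.card_union_of_disjoint hdisj, Finset.card_univ, Fintype.card_prod,
      Fintype.card_fin] at this
    omega
  -- m ≥ 2n
  have hmn : 2 * n ≤ m := by
    by_contra h
    push_neg at h
    nlinarith [hdense, hn]
  -- m² ≤ 4nS
  have hS4 : m ^ 2 ≤ 4 * (n * S) := by nlinarith [hC1, hmn]
  -- n² ≤ S
  have hSn : n ^ 2 ≤ S := by
    have : n * n ^ 2 ≤ n * S := by nlinarith [hdense, hS4]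
    exact Nat.le_of_mul_le_mul_left this hn
  -- S² ≤ 2n²C
  have hS2 : S ^ 2 ≤ 2 * n ^ 2 * C := by
    have e1 : 2 * A.card * (2 * C + S) ≤ n * n * (2 * C + S) :=
      Nat.mul_le_mul hP (le_refl (2 * C + S))
    nlinarith [hC2, e1, hSn]
  calc m ^ 4 = (m ^ 2) ^ 2 := by ring
    _ ≤ (4 * (n * S)) ^ 2 := Nat.pow_le_pow_left hS4 2
    _ = 16 * n ^ 2 * S ^ 2 := by ring
    _ ≤ 16 * n ^ 2 * (2 * n ^ 2 * C) := Nat.mul_le_mul (le_refl (16 * n ^ 2)) hS2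
    _ = 32 * n ^ 4 * C := by ring
end

section
/- Let G = (U ∪ V, E) be a bipartite graph with |U| = |V| = n ≥ 1 nodes per partition, let N = ∑_{{v,v'} ⊆ V, v ≠ v'} N(v,v'), and let C = ∑_{{v,v'} ⊆ V, v ≠ v'} binom(N(v,v'), 2) be the number of 4-cycles of G. If N ≥ n(n−1), then C ≥ N²/(2n²) (equivalently, 2n²·C ≥ N²). -/
open Finset

/-- In a bipartite graph with `n ≥ 1` vertices per side, let
`N = ∑_{v < v'} N(v,v')` and let `C = ∑_{v < v'} binom(N(v,v'), 2)` be the number of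
4-cycles. If `N ≥ n(n-1)`, then `C ≥ N²/(2n²)` (equivalently `2n²·C ≥ N²`). -/
theorem four_cycles_from_incidences (n : ℕ) (hn : 1 ≤ n)
    (E : Finset (Fin n × Fin n))
    (Ncn : Fin n → Fin n → ℕ)
    (hNcn : ∀ v v', Ncn v v' = (univ.filter (fun u : Fin n => (u, v) ∈ E ∧ (u, v') ∈ E)).card)
    (N : ℕ)
    (hN : N = ∑ p ∈ univ.filter (fun p : Fin n × Fin n => p.1 < p.2), Ncn p.1 p.2)
    (C : ℕ)
    (hC : C = ∑ p ∈ univ.filter (fun p : Fin n × Fin n => p.1 < p.2),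
      Nat.choose (Ncn p.1 p.2) 2)
    (hbig : N ≥ n * (n - 1)) :
    2 * n ^ 2 * C ≥ N ^ 2 := by
  classical
  set s : Finset (Fin n × Fin n) := univ.filter (fun p : Fin n × Fin n => p.1 < p.2) with hs
  -- card of s
  have hswap : (univ.filter (fun p : Fin n × Fin n => p.2 < p.1)).card = s.card := by
    apply Finset.card_bij (fun p _ => Prod.swap p)
    · intro p hp
      simp only [hs, mem_filter, mem_univ, true_and] at hp ⊢
      simpa using hp
    · intro p _ q _ h; exact Prod.swap_injective h
    · intro p hp
      refine ⟨p.swap, ?_, by simp⟩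
      simp only [hs, mem_filter, mem_univ, true_and] at hp ⊢
      simpa using hp
  have hod : (univ : Finset (Fin n)).offDiag
      = univ.filter (fun p : Fin n × Fin n => p.1 ≠ p.2) := by
    ext p; simp [Finset.mem_offDiag]
  have h1 : (univ.filter (fun p : Fin n × Fin n => p.1 ≠ p.2)).card = n * n - n := by
    rw [← hod, Finset.offDiag_card]; simp
  have h2 : (univ.filter (fun p : Fin n × Fin n => p.1 ≠ p.2))
      = s ∪ univ.filter (fun p : Fin n × Fin n => p.2 < p.1) := by
    ext p
    simp only [Finset.mem_union, Finset.mem_filter, Finset.mem_univ, true_and, hs]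
    constructor
    · intro h; exact (lt_or_gt_of_ne h).imp id id
    · rintro (h | h)
      · exact ne_of_lt h
      · exact ne_of_gt h
  have hdisj : Disjoint s (univ.filter (fun p : Fin n × Fin n => p.2 < p.1)) := by
    rw [Finset.disjoint_left]
    intro p hp hq
    simp only [hs, mem_filter, mem_univ, true_and] at hp hq
    exact absurd (lt_trans hp hq) (lt_irrefl _)
  have hk : 2 * s.card = n * n - n := by
    rw [h2, Finset.card_union_of_disjoint hdisj, hswap] at h1
    omega
  have hnn : n * n = n * (n - 1) + n := by
    cases n with
    | zero => simp
    | succ m => have : (m + 1) * (m + 1) = (m + 1) * m + (m + 1) := by ring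
                simpa [Nat.succ_sub_one] using this
  have hk' : 2 * s.card = n * (n - 1) := by omega
  -- Cauchy-Schwarz
  have hcs : (N : ℚ) ^ 2 ≤ (s.card : ℚ) * ∑ p ∈ s, (Ncn p.1 p.2 : ℚ) ^ 2 := by
    rw [hN]
    push_cast
    exact sq_sum_le_card_mul_sum_sq
  have hcsn : N ^ 2 ≤ s.card * ∑ p ∈ s, (Ncn p.1 p.2) ^ 2 := by exact_mod_cast hcs
  have hsum : ∑ p ∈ s, (Ncn p.1 p.2) ^ 2 = 2 * C + N := by
    rw [hC, hN, Finset.mul_sum, ← Finset.sum_add_distrib]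
    apply Finset.sum_congr rfl
    intro p _
    set x := Ncn p.1 p.2 with hx
    rw [Nat.choose_two_right]
    have hdvd : 2 ∣ x * (x - 1) := by
      cases x with
      | zero => simp
      | succ m => simpa [Nat.succ_sub_one, Nat.mul_comm] using (Nat.even_mul_succ_self m).two_dvd
    have h2d : 2 * (x * (x - 1) / 2) = x * (x - 1) := Nat.mul_div_cancel' hdvd
    have hxsq : x ^ 2 = x * (x - 1) + x := by
      cases x with
      | zero => simp
      | succ m => have : (m + 1) ^ 2 = (m + 1) * m + (m + 1) := by ring
                  simpa [Nat.succ_sub_one] using this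
    omega
  rw [hsum] at hcsn
  have h5 : n * (n - 1) * N ≤ N * N := Nat.mul_le_mul_right N hbig
  have h6 : n * (n - 1) * (2 * C) ≤ n ^ 2 * (2 * C) := by
    have : n * (n - 1) ≤ n ^ 2 := by
      have := Nat.mul_le_mul_left n (Nat.sub_le n 1)
      nlinarith
    exact Nat.mul_le_mul_right _ this
  nlinarith [hcsn, hk', h5, h6]
end

section
/- Let X_1, …, X_n be independent random variables on a probability space, each taking values in [0,1], and set X = ∑_{i=1}^n X_i. Then for any real c ≥ 1, Pr[X > (1 + 6ec)·E[X] + c·log n] ≤ n^{−c}, where e is Euler's number and log is the natural logarithm. -/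
open MeasureTheory ProbabilityTheory

/-- Chernoff-type bound: if `X₁, …, Xₙ` are independent random variables with values in
`[0,1]` (almost surely) and `X = ∑ Xᵢ`, then for any real `c ≥ 1`,
`Pr[X > (1 + 6ec)·E[X] + c·log n] ≤ n^{-c}`. -/
theorem chernoff_bound {Ω : Type*} [MeasurableSpace Ω]
    (μ : Measure Ω) [IsProbabilityMeasure μ]
    (n : ℕ) (X : Fin n → Ω → ℝ)
    (hmeas : ∀ i, Measurable (X i))
    (hindep : iIndepFun X μ)
    (hbound : ∀ i, ∀ᵐ ω ∂μ, X i ω ∈ Set.Icc (0 : ℝ) 1)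
    (c : ℝ) (hc : 1 ≤ c) :
    μ {ω | (1 + 6 * Real.exp 1 * c) * (∫ ω', (∑ i, X i ω') ∂μ) + c * Real.log n
        < ∑ i, X i ω}
      ≤ ENNReal.ofReal ((n : ℝ) ^ (-c)) := by
  rcases Nat.eq_zero_or_pos n with hn | hn
  · subst hn
    have : {ω : Ω | (1 + 6 * Real.exp 1 * c) * (∫ ω', (∑ i, X i ω') ∂μ) + c * Real.log 0
        < ∑ i, X i ω} = ∅ := by
      ext ω
      simp
    rw [Nat.cast_zero, this]
    simp
  -- main case n ≥ 1
  set e := Real.exp 1 with he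
  -- integrability of each X i
  have hXint : ∀ i, Integrable (X i) μ := by
    intro i
    refine (integrable_const (1 : ℝ)).mono' (hmeas i).aestronglyMeasurable ?_
    filter_upwards [hbound i] with ω hω
    rw [Real.norm_eq_abs, abs_of_nonneg hω.1]
    exact hω.2
  -- integrability of exp(1 * X i)
  have hexpint : ∀ i, Integrable (fun ω => Real.exp (1 * X i ω)) μ := by
    intro i
    refine (integrable_const e).mono' ((hmeas i).const_mul 1).exp.aestronglyMeasurable ?_
    filter_upwards [hbound i] with ω hω
    rw [Real.norm_eq_abs, abs_of_nonneg (Real.exp_pos _).le, one_mul]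
    exact Real.exp_le_exp.2 hω.2
  -- integrability of exp(1 * ∑ X i)
  have hexpint_sum : Integrable (fun ω => Real.exp (1 * ∑ i, X i ω)) μ := by
    refine (integrable_const (Real.exp n)).mono'
      ((Finset.measurable_sum Finset.univ (fun i _ => hmeas i)).const_mul 1).exp.aestronglyMeasurable ?_
    have hb : ∀ᵐ ω ∂μ, ∀ i, X i ω ∈ Set.Icc (0:ℝ) 1 := ae_all_iff.2 hbound
    filter_upwards [hb] with ω hω
    rw [Real.norm_eq_abs, abs_of_nonneg (Real.exp_pos _).le, one_mul]
    refine Real.exp_le_exp.2 ?_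
    calc ∑ i, X i ω ≤ ∑ _i : Fin n, (1:ℝ) := Finset.sum_le_sum fun i _ => (hω i).2
    _ = n := by simp
  -- expectation m
  set m := ∫ ω', (∑ i, X i ω') ∂μ with hm
  have hm_sum : m = ∑ i, ∫ ω', X i ω' ∂μ := integral_finset_sum _ fun i _ => hXint i
  have hEnonneg : ∀ i, 0 ≤ ∫ ω', X i ω' ∂μ := fun i =>
    integral_nonneg_of_ae ((hbound i).mono fun ω hω => hω.1)
  have hm0 : 0 ≤ m := hm_sum ▸ Finset.sum_nonneg fun i _ => hEnonneg i
  -- mgf bound per coordinate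
  have hmgf_i : ∀ i, mgf (X i) μ 1 ≤ Real.exp ((e - 1) * ∫ ω', X i ω' ∂μ) := by
    intro i
    have h1 : mgf (X i) μ 1 ≤ ∫ ω', (1 + (e - 1) * X i ω') ∂μ := by
      refine integral_mono_ae (by simpa using hexpint i) ?_ ?_
      · exact (integrable_const (1:ℝ)).add ((hXint i).const_mul _)
      · filter_upwards [hbound i] with ω hω
        have := convexOn_exp.2 (Set.mem_univ (0:ℝ)) (Set.mem_univ (1:ℝ))
          (by linarith [hω.2] : (0:ℝ) ≤ 1 - X i ω) hω.1 (by ring)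
        simp only [smul_eq_mul, mul_zero, mul_one, zero_add, Real.exp_zero] at this
        simpa [one_mul] using this.trans_eq (by ring)
    have h2 : ∫ ω', (1 + (e - 1) * X i ω') ∂μ = 1 + (e - 1) * ∫ ω', X i ω' ∂μ := by
      rw [integral_add (integrable_const _) ((hXint i).const_mul _), integral_const,
        integral_const_mul]
      simp
    calc mgf (X i) μ 1 ≤ 1 + (e - 1) * ∫ ω', X i ω' ∂μ := h1.trans_eq h2
    _ ≤ Real.exp ((e - 1) * ∫ ω', X i ω' ∂μ) := by
        have := Real.add_one_le_exp ((e - 1) * ∫ ω', X i ω' ∂μ)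
        linarith
  -- mgf of sum
  have hmgf_sum : mgf (fun ω => ∑ i, X i ω) μ 1 ≤ Real.exp ((e - 1) * m) := by
    have heq : (fun ω => ∑ i, X i ω) = ∑ i, X i := by ext ω; simp
    rw [heq, hindep.mgf_sum hmeas]
    calc ∏ i, mgf (X i) μ 1 ≤ ∏ i, Real.exp ((e - 1) * ∫ ω', X i ω' ∂μ) :=
          Finset.prod_le_prod (fun i _ => mgf_nonneg) (fun i _ => hmgf_i i)
    _ = Real.exp (∑ i, (e - 1) * ∫ ω', X i ω' ∂μ) := (Real.exp_sum _ _).symm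
    _ = Real.exp ((e - 1) * m) := by rw [hm_sum, Finset.mul_sum]
  set a := (1 + 6 * e * c) * m + c * Real.log n with ha
  have hcher := measure_ge_le_exp_mul_mgf (μ := μ) (X := fun ω => ∑ i, X i ω) a
    zero_le_one hexpint_sum
  have hfinal : Real.exp (-1 * a) * mgf (fun ω => ∑ i, X i ω) μ 1 ≤ (n : ℝ) ^ (-c) := by
    calc Real.exp (-1 * a) * mgf (fun ω => ∑ i, X i ω) μ 1
        ≤ Real.exp (-1 * a) * Real.exp ((e - 1) * m) := by
          exact mul_le_mul_of_nonneg_left hmgf_sum (Real.exp_pos _).le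
    _ = Real.exp ((e - 1) * m - a) := by rw [← Real.exp_add]; ring_nf
    _ ≤ Real.exp (-(c * Real.log n)) := by
        refine Real.exp_le_exp.2 ?_
        have he2 : (2:ℝ) < e := by
          rw [he]; have := Real.exp_one_gt_d9; linarith
        nlinarith [mul_nonneg (mul_nonneg (by linarith : (0:ℝ) ≤ e) (by linarith : (0:ℝ) ≤ c)) hm0]
    _ = (n : ℝ) ^ (-c) := by
        rw [Real.rpow_def_of_pos (by exact_mod_cast hn)]
        congr 1; ring
  have hsub : {ω | a < ∑ i, X i ω} ⊆ {ω | a ≤ ∑ i, X i ω} := Set.setOf_subset_setOf.2 fun ω hω => hω.le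
  calc μ {ω | a < ∑ i, X i ω} ≤ μ {ω | a ≤ ∑ i, X i ω} := measure_mono hsub
  _ = ENNReal.ofReal (μ {ω | a ≤ ∑ i, X i ω}).toReal :=
      (ENNReal.ofReal_toReal (measure_ne_top μ _)).symm
  _ ≤ ENNReal.ofReal ((n : ℝ) ^ (-c)) := ENNReal.ofReal_le_ofReal (hcher.trans hfinal)
end

section
/- Let A, B, tildeC be n×n integer matrices and fix indices i^r, j^r ∈ {1,…,n}. Define A^r_{i,k} := A_{i,k} + B_{k,j^r} − tildeC_{i,j^r} and B^r_{k,j} := B_{k,j} − B_{k,j^r} + tildeC_{i^r,j^r} − tildeC_{i^r,j} for all i, k, j. Then for all i, j ∈ {1,…,n}, (A ⋆ B)_{i,j} = (A^r ⋆ B^r)_{i,j} + tildeC_{i,j^r} − tildeC_{i^r,j^r} + tildeC_{i^r,j}. -/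
/-- For the perturbed matrices `Aʳ_{i,k} = A_{i,k} + B_{k,jʳ} - tildeC_{i,jʳ}` and
`Bʳ_{k,j} = B_{k,j} - B_{k,jʳ} + tildeC_{iʳ,jʳ} - tildeC_{iʳ,j}`, the original product can
be recovered: `(A ⋆ B)_{i,j} = (Aʳ ⋆ Bʳ)_{i,j} + tildeC_{i,jʳ} - tildeC_{iʳ,jʳ} + tildeC_{iʳ,j}`. -/
theorem minplus_perturbation_recovery (n : ℕ) (hn : 1 ≤ n)
    (A B tC : ℕ → ℕ → ℤ)
    (ir jr : ℕ) (hir : 1 ≤ ir ∧ ir ≤ n) (hjr : 1 ≤ jr ∧ jr ≤ n)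
    (Ar Br : ℕ → ℕ → ℤ)
    (hAr : ∀ i k, Ar i k = A i k + B k jr - tC i jr)
    (hBr : ∀ k j, Br k j = B k j - B k jr + tC ir jr - tC ir j) :
    ∀ i j, 1 ≤ i → i ≤ n → 1 ≤ j → j ≤ n →
      minplus n hn A B i j = minplus n hn Ar Br i j + tC i jr - tC ir jr + tC ir j := by
  intro i j _ _ _ _
  unfold minplus
  have h : ∀ k, Ar i k + Br k j = (A i k + B k j) + (- tC i jr + tC ir jr - tC ir j) := by
    intro k; rw [hAr, hBr]; ring
  simp only [h]
  have := map_finset_inf' (OrderIso.addRight (-tC i jr + tC ir jr - tC ir j))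
    (Finset.nonempty_Icc.mpr hn) (fun k => A i k + B k j)
  simp only [Function.comp_def, OrderIso.addRight_apply] at this
  rw [← this]
  ring
end

section
/- Let A, B be n×n matrices with nonnegative integer entries, and define A'_{i,j} := ⌈A_{i,j}/2⌉ and B'_{i,j} := ⌈B_{i,j}/2⌉ for all i, j. Then for all i, j ∈ {1,…,n}: (A ⋆ B)_{i,j} ≤ 2·(A' ⋆ B')_{i,j} ≤ (A ⋆ B)_{i,j} + 2. In particular, 2·(A' ⋆ B') is an entrywise overestimate of A ⋆ B with additive error at most 2. -/
lemma ceil_half_lb (a : ℤ) : a ≤ 2 * ⌈(a : ℚ) / 2⌉ := by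
  have h := Int.le_ceil ((a : ℚ) / 2)
  have : (a : ℚ) ≤ 2 * (⌈(a : ℚ) / 2⌉ : ℚ) := by linarith
  exact_mod_cast this

lemma ceil_half_ub (a : ℤ) : 2 * ⌈(a : ℚ) / 2⌉ ≤ a + 1 := by
  have h := Int.ceil_lt_add_one ((a : ℚ) / 2)
  have : 2 * (⌈(a : ℚ) / 2⌉ : ℚ) < (a : ℚ) + 2 := by linarith
  have h2 : 2 * ⌈(a : ℚ) / 2⌉ < a + 2 := by exact_mod_cast this
  omega

/-- Scaling step: for matrices `A, B` with nonnegative integer entries and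
`A'_{i,j} = ⌈A_{i,j}/2⌉`, `B'_{i,j} = ⌈B_{i,j}/2⌉`, we have
`(A ⋆ B)_{i,j} ≤ 2·(A' ⋆ B')_{i,j} ≤ (A ⋆ B)_{i,j} + 2` for all `i, j ∈ {1,…,n}`;
i.e., `2·(A' ⋆ B')` overestimates `A ⋆ B` with additive error at most `2`. -/
theorem minplus_scaling (n : ℕ) (hn : 1 ≤ n)
    (A B : ℕ → ℕ → ℤ)
    (hAnn : ∀ i j, 0 ≤ A i j) (hBnn : ∀ i j, 0 ≤ B i j)
    (A' B' : ℕ → ℕ → ℤ)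
    (hA' : ∀ i j, A' i j = ⌈(A i j : ℚ) / 2⌉)
    (hB' : ∀ i j, B' i j = ⌈(B i j : ℚ) / 2⌉) :
    ∀ i j, 1 ≤ i → i ≤ n → 1 ≤ j → j ≤ n →
      minplus n hn A B i j ≤ 2 * minplus n hn A' B' i j ∧
      2 * minplus n hn A' B' i j ≤ minplus n hn A B i j + 2 := by
  intro i j _ _ _ _
  have hne := Finset.nonempty_Icc.mpr hn
  constructor
  · obtain ⟨k, hk, hkeq⟩ := Finset.exists_mem_eq_inf' hne (fun k => A' i k + B' k j)
    have hmin : minplus n hn A B i j ≤ A i k + B k j :=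
      Finset.inf'_le _ hk
    have hA2 : A i k ≤ 2 * A' i k := by rw [hA']; exact ceil_half_lb _
    have hB2 : B k j ≤ 2 * B' k j := by rw [hB']; exact ceil_half_lb _
    have : minplus n hn A' B' i j = A' i k + B' k j := hkeq
    rw [this]; linarith
  · obtain ⟨k, hk, hkeq⟩ := Finset.exists_mem_eq_inf' hne (fun k => A i k + B k j)
    have hmin : minplus n hn A' B' i j ≤ A' i k + B' k j :=
      Finset.inf'_le _ hk
    have hA2 : 2 * A' i k ≤ A i k + 1 := by rw [hA']; exact ceil_half_ub _
    have hB2 : 2 * B' k j ≤ B k j + 1 := by rw [hB']; exact ceil_half_ub _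
    have : minplus n hn A B i j = A i k + B k j := hkeq
    rw [this]; linarith
end

section
/- Let A, B be n×n integer matrices, W ≥ 0 and Δ ≥ 1 integers, and suppose {1,…,n} is partitioned into sets K_1, …, K_{n/Δ} such that max_{k ∈ K_ℓ} A_{i,k} − min_{k ∈ K_ℓ} A_{i,k} ≤ ΔW for all i ∈ {1,…,n} and all ℓ. For each ℓ and j, let v(ℓ,j) := min{ B_{k,j} : k ∈ K_ℓ }, and define B' by B'_{k,j} := min{ B_{k,j}, v(ℓ,j) + 2ΔW } for k ∈ K_ℓ. Then A ⋆ B' = A ⋆ B. Moreover, B' satisfies max_{k ∈ K_ℓ} B'_{k,j} − min_{k ∈ K_ℓ} B'_{k,j} ≤ 2ΔW for all ℓ, j. -/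
/-- Suppose `{1,…,n}` is partitioned into nonempty blocks `K_1, …, K_{n/Δ}` such that on
each block the entries of each row of `A` vary by at most `ΔW`. Let
`v(ℓ,j) = min{B_{k,j} : k ∈ K_ℓ}` and `B'_{k,j} = min{B_{k,j}, v(ℓ,j) + 2ΔW}` for
`k ∈ K_ℓ`. Then `A ⋆ B' = A ⋆ B`, and on each block the entries of each column of `B'`
vary by at most `2ΔW`. -/
theorem truncation_preserves_minplus (n Δ : ℕ) (hn : 1 ≤ n) (hΔ : 1 ≤ Δ) (hdvd : Δ ∣ n)
    (W : ℤ) (hW : 0 ≤ W)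
    (A B : ℕ → ℕ → ℤ)
    (K : ℕ → Finset ℕ)
    (hKne : ∀ ℓ, ℓ ∈ Finset.Icc 1 (n / Δ) → (K ℓ).Nonempty)
    (hKsub : ∀ ℓ, ℓ ∈ Finset.Icc 1 (n / Δ) → K ℓ ⊆ Finset.Icc 1 n)
    (hKpart : ∀ k, k ∈ Finset.Icc 1 n → ∃! ℓ, ℓ ∈ Finset.Icc 1 (n / Δ) ∧ k ∈ K ℓ)
    (hAvar : ∀ i, 1 ≤ i → i ≤ n → ∀ ℓ (hℓ : ℓ ∈ Finset.Icc 1 (n / Δ)),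
      (K ℓ).sup' (hKne ℓ hℓ) (fun k => A i k) - (K ℓ).inf' (hKne ℓ hℓ) (fun k => A i k)
        ≤ (Δ : ℤ) * W)
    (B' : ℕ → ℕ → ℤ)
    (hB' : ∀ ℓ (hℓ : ℓ ∈ Finset.Icc 1 (n / Δ)), ∀ k ∈ K ℓ, ∀ j,
      B' k j = min (B k j) ((K ℓ).inf' (hKne ℓ hℓ) (fun k' => B k' j) + 2 * (Δ : ℤ) * W)) :
    (∀ i j, 1 ≤ i → i ≤ n → 1 ≤ j → j ≤ n →
      minplus n hn A B' i j = minplus n hn A B i j) ∧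
    (∀ ℓ (hℓ : ℓ ∈ Finset.Icc 1 (n / Δ)), ∀ j, 1 ≤ j → j ≤ n →
      (K ℓ).sup' (hKne ℓ hℓ) (fun k => B' k j) - (K ℓ).inf' (hKne ℓ hℓ) (fun k => B' k j)
        ≤ 2 * (Δ : ℤ) * W) := by

  have hΔW : 0 ≤ (Δ : ℤ) * W := mul_nonneg (by exact_mod_cast Nat.zero_le Δ) hW
  constructor
  · intro i j hi hin hj hjn
    unfold minplus
    apply le_antisymm
    · apply Finset.le_inf'
      intro k hk
      obtain ⟨ℓ, ⟨hℓ, hkℓ⟩, _⟩ := hKpart k hk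
      calc (Finset.Icc 1 n).inf' (Finset.nonempty_Icc.mpr hn) (fun k => A i k + B' k j)
          ≤ A i k + B' k j := Finset.inf'_le _ hk
        _ ≤ A i k + B k j := by
            rw [hB' ℓ hℓ k hkℓ j]; exact add_le_add le_rfl (min_le_left _ _)
    · apply Finset.le_inf'
      intro k hk
      obtain ⟨ℓ, ⟨hℓ, hkℓ⟩, _⟩ := hKpart k hk
      rw [hB' ℓ hℓ k hkℓ j]
      rcases min_cases (B k j) ((K ℓ).inf' (hKne ℓ hℓ) (fun k' => B k' j) + 2 * (Δ : ℤ) * W)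
        with ⟨heq, _⟩ | ⟨heq, _⟩
      · rw [heq]; exact Finset.inf'_le _ hk
      · rw [heq]
        obtain ⟨k', hk', hk'eq⟩ := Finset.exists_mem_eq_inf' (hKne ℓ hℓ) (fun k' => B k' j)
        rw [hk'eq]
        have h1 : A i k' ≤ A i k + 2 * (Δ : ℤ) * W := by
          have hs : A i k' ≤ (K ℓ).sup' (hKne ℓ hℓ) (fun k => A i k) :=
            Finset.le_sup' _ hk'
          have hi2 : (K ℓ).inf' (hKne ℓ hℓ) (fun k => A i k) ≤ A i k :=
            Finset.inf'_le _ hkℓ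
          have := hAvar i hi hin ℓ hℓ
          linarith
        calc (Finset.Icc 1 n).inf' (Finset.nonempty_Icc.mpr hn) (fun k => A i k + B k j)
            ≤ A i k' + B k' j := Finset.inf'_le _ (hKsub ℓ hℓ hk')
          _ ≤ A i k + (B k' j + 2 * (Δ : ℤ) * W) := by linarith
  · intro ℓ hℓ j hj hjn
    have hsup : (K ℓ).sup' (hKne ℓ hℓ) (fun k => B' k j)
        ≤ (K ℓ).inf' (hKne ℓ hℓ) (fun k' => B k' j) + 2 * (Δ : ℤ) * W := by
      apply Finset.sup'_le
      intro k hk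
      rw [hB' ℓ hℓ k hk j]
      exact min_le_right _ _
    have hinf : (K ℓ).inf' (hKne ℓ hℓ) (fun k' => B k' j)
        ≤ (K ℓ).inf' (hKne ℓ hℓ) (fun k => B' k j) := by
      apply Finset.le_inf'
      intro k hk
      rw [hB' ℓ hℓ k hk j]
      apply le_min (Finset.inf'_le _ hk)
      linarith
    linarith
end

section
/- Let A, B be n×n W-bounded-difference integer matrices, C = A ⋆ B, let Δ ≥ 1 divide n, and define tildeC_{i',j'} := min{ A_{i',k'} + B_{k',j'} : k' ∈ {Δ, 2Δ, …, n} } for i', j' divisible by Δ. Then for all i', k', j' divisible by Δ and all (i,k,j) ∈ I(i') × I(k') × I(j'): (a) if (i,k,j) is strongly relevant, i.e., A_{i,k} + B_{k,j} = C_{i,j}, then it is approximately relevant, i.e., |A_{i',k'} + B_{k',j'} − tildeC_{i',j'}| ≤ 8ΔW; and (b) if (i,k,j) is approximately relevant, then it is weakly relevant, i.e., |A_{i,k} + B_{k,j} − C_{i,j}| ≤ 16ΔW. -/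
private lemma bd_row {n : ℕ} {W : ℤ} {X : ℕ → ℕ → ℤ} (h : BoundedDiff n W X)
    {i : ℕ} (hi1 : 1 ≤ i) (hi2 : i ≤ n) :
    ∀ d j, 1 ≤ j → j + d ≤ n → |X i j - X i (j + d)| ≤ W * d := by
  intro d
  induction d with
  | zero => intro j _ _; simp
  | succ d ih =>
    intro j hj1 hj2
    have h1 := ih j hj1 (by omega)
    have h2 := h.1 i (j + d) hi1 hi2 (by omega) (by omega)
    have h3 : |X i j - X i (j + (d + 1))| ≤
        |X i j - X i (j + d)| + |X i (j + d) - X i (j + d + 1)| := by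
      have e : j + (d + 1) = j + d + 1 := by ring
      rw [e]
      exact abs_sub_le _ _ _
    push_cast
    push_cast at h1
    linarith

private lemma bd_col {n : ℕ} {W : ℤ} {X : ℕ → ℕ → ℤ} (h : BoundedDiff n W X)
    {j : ℕ} (hj1 : 1 ≤ j) (hj2 : j ≤ n) :
    ∀ d i, 1 ≤ i → i + d ≤ n → |X i j - X (i + d) j| ≤ W * d := by
  intro d
  induction d with
  | zero => intro i _ _; simp
  | succ d ih =>
    intro i hi1 hi2
    have h1 := ih i hi1 (by omega)
    have h2 := h.2 (i + d) j (by omega) (by omega) hj1 hj2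
    have h3 : |X i j - X (i + (d + 1)) j| ≤
        |X i j - X (i + d) j| + |X (i + d) j - X (i + d + 1) j| := by
      have e : i + (d + 1) = i + d + 1 := by ring
      rw [e]
      exact abs_sub_le _ _ _
    push_cast
    push_cast at h1
    linarith

private lemma bd_dist2 {n Δ : ℕ} {W : ℤ} (hW : 0 ≤ W) {X : ℕ → ℕ → ℤ}
    (h : BoundedDiff n W X) {i j i' j' : ℕ}
    (h1 : 1 ≤ i) (h2 : i ≤ i') (h3 : i' ≤ n) (h4 : 1 ≤ j) (h5 : j ≤ j') (h6 : j' ≤ n)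
    (h7 : i' < i + Δ) (h8 : j' < j + Δ) :
    |X i j - X i' j'| ≤ 2 * (Δ : ℤ) * W := by
  have d1 := bd_col h h4 (show j ≤ n by omega) (i' - i) i h1 (by omega)
  rw [show i + (i' - i) = i' by omega] at d1
  have d2 := bd_row h (show 1 ≤ i' by omega) h3 (j' - j) j h4 (by omega)
  rw [show j + (j' - j) = j' by omega] at d2
  have habs := abs_sub_le (X i j) (X i' j) (X i' j')
  have hab : (i' - i) + (j' - j) ≤ 2 * Δ := by omega
  have hcast : ((i' - i : ℕ) : ℤ) + ((j' - j : ℕ) : ℤ) ≤ 2 * (Δ : ℤ) := by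
    exact_mod_cast hab
  have hmul := mul_le_mul_of_nonneg_left hcast hW
  have e3 : W * (((i' - i : ℕ) : ℤ) + ((j' - j : ℕ) : ℤ))
      = W * ((i' - i : ℕ) : ℤ) + W * ((j' - j : ℕ) : ℤ) := by ring
  have e4 : W * (2 * (Δ : ℤ)) = 2 * (Δ : ℤ) * W := by ring
  linarith

/-- For `W`-BD matrices `A, B`, `C = A ⋆ B`, `Δ ∣ n`, and the block approximation
`tildeC_{i',j'} = min{A_{i',k'} + B_{k',j'} : k' ∈ {Δ,…,n} multiple of Δ}`:
for all block corners `i', k', j'` and all `(i,k,j) ∈ I(i') × I(k') × I(j')`,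
(a) strongly relevant (`A_{i,k} + B_{k,j} = C_{i,j}`) implies approximately relevant
(`|A_{i',k'} + B_{k',j'} - tildeC_{i',j'}| ≤ 8ΔW`), and
(b) approximately relevant implies weakly relevant
(`|A_{i,k} + B_{k,j} - C_{i,j}| ≤ 16ΔW`). -/
theorem relevance_relations (n Δ : ℕ) (hn : 1 ≤ n) (hΔ : 1 ≤ Δ) (hdvd : Δ ∣ n)
    (W : ℤ) (hW : 0 ≤ W) (A B : ℕ → ℕ → ℤ)
    (hA : BoundedDiff n W A) (hB : BoundedDiff n W B)
    (hmul : ((Finset.Icc 1 n).filter (fun k => Δ ∣ k)).Nonempty)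
    (tC : ℕ → ℕ → ℤ)
    (htC : ∀ i' j', Δ ∣ i' → Δ ∣ j' → 1 ≤ i' → i' ≤ n → 1 ≤ j' → j' ≤ n →
      tC i' j' = ((Finset.Icc 1 n).filter (fun k => Δ ∣ k)).inf' hmul
        (fun k' => A i' k' + B k' j')) :
    ∀ i' k' j', Δ ∣ i' → Δ ∣ k' → Δ ∣ j' →
      1 ≤ i' → i' ≤ n → 1 ≤ k' → k' ≤ n → 1 ≤ j' → j' ≤ n →
      ∀ i k j, i' - Δ < i → i ≤ i' → k' - Δ < k → k ≤ k' → j' - Δ < j → j ≤ j' →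
        (A i k + B k j = minplus n hn A B i j →
          |A i' k' + B k' j' - tC i' j'| ≤ 8 * (Δ : ℤ) * W) ∧
        (|A i' k' + B k' j' - tC i' j'| ≤ 8 * (Δ : ℤ) * W →
          |A i k + B k j - minplus n hn A B i j| ≤ 16 * (Δ : ℤ) * W) := by
  intro i' k' j' hdi hdk hdj hi'1 hi'n hk'1 hk'n hj'1 hj'n
  intro i k j hilo ihi hklo khi hjlo jhi
  have hΔi : Δ ≤ i' := Nat.le_of_dvd (by omega) hdi
  have hΔk : Δ ≤ k' := Nat.le_of_dvd (by omega) hdk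
  have hΔj : Δ ≤ j' := Nat.le_of_dvd (by omega) hdj
  have hi1 : 1 ≤ i := by omega
  have hk1 : 1 ≤ k := by omega
  have hj1 : 1 ≤ j := by omega
  have hnn : (0:ℤ) ≤ (Δ:ℤ) * W := mul_nonneg (by positivity) hW
  -- pointwise bounds between (i,k,j) and (i',k',j')
  have dA := bd_dist2 (Δ := Δ) hW hA hi1 ihi hi'n hk1 khi hk'n (by omega) (by omega)
  have dB := bd_dist2 (Δ := Δ) hW hB hk1 khi hk'n hj1 jhi hj'n (by omega) (by omega)
  obtain ⟨dA1, dA2⟩ := abs_le.mp dA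
  obtain ⟨dB1, dB2⟩ := abs_le.mp dB
  -- min-plus facts
  have Cle : ∀ (a b m : ℕ), 1 ≤ m → m ≤ n → minplus n hn A B a b ≤ A a m + B m b :=
    fun a b m h1 h2 => Finset.inf'_le _ (Finset.mem_Icc.mpr ⟨h1, h2⟩)
  have tCeq := htC i' j' hdi hdj hi'1 hi'n hj'1 hj'n
  have tC_le : ∀ m, Δ ∣ m → 1 ≤ m → m ≤ n → tC i' j' ≤ A i' m + B m j' := by
    intro m hd h1 h2
    rw [tCeq]
    exact Finset.inf'_le _ (Finset.mem_filter.mpr ⟨Finset.mem_Icc.mpr ⟨h1, h2⟩, hd⟩)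
  have tC_ge : minplus n hn A B i' j' ≤ tC i' j' := by
    rw [tCeq]
    apply Finset.le_inf'
    intro m hm
    simp only [Finset.mem_filter, Finset.mem_Icc] at hm
    exact Cle i' j' m hm.1.1 hm.1.2
  -- C i j ≤ C i' j' + 4ΔW
  have hCC : minplus n hn A B i j ≤ minplus n hn A B i' j' + 4 * (Δ:ℤ) * W := by
    obtain ⟨k₀, hk₀m, hk₀e⟩ := Finset.exists_mem_eq_inf' (Finset.nonempty_Icc.mpr hn)
      (fun m => A i' m + B m j')
    rw [Finset.mem_Icc] at hk₀m
    have d1 := bd_dist2 (Δ := Δ) hW hA hi1 ihi hi'n hk₀m.1 le_rfl hk₀m.2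
      (by omega) (by omega)
    have d2 := bd_dist2 (Δ := Δ) hW hB hk₀m.1 le_rfl hk₀m.2 hj1 jhi hj'n
      (by omega) (by omega)
    have h3 := Cle i j k₀ hk₀m.1 hk₀m.2
    have e : minplus n hn A B i' j' = A i' k₀ + B k₀ j' := hk₀e
    obtain ⟨l1, r1⟩ := abs_le.mp d1
    obtain ⟨l2, r2⟩ := abs_le.mp d2
    linarith
  -- tC ≤ C i j + 4ΔW
  have htCle : tC i' j' ≤ minplus n hn A B i j + 4 * (Δ:ℤ) * W := by
    obtain ⟨k₀, hk₀m, hk₀e⟩ := Finset.exists_mem_eq_inf' (Finset.nonempty_Icc.mpr hn)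
      (fun m => A i m + B m j)
    rw [Finset.mem_Icc] at hk₀m
    obtain ⟨b, hb⟩ := hdvd
    have hdm := Nat.div_add_mod (k₀ + Δ - 1) Δ
    have hrlt : (k₀ + Δ - 1) % Δ < Δ := Nat.mod_lt _ (by omega)
    obtain ⟨m, hm⟩ : ∃ m, m = Δ * ((k₀ + Δ - 1) / Δ) := ⟨_, rfl⟩
    rw [← hm] at hdm
    have hm1 : k₀ ≤ m := by omega
    have hm2 : m < k₀ + Δ := by omega
    have e5 : Δ * (b + 1) = n + Δ := by rw [hb]; ring
    have hqb : (k₀ + Δ - 1) / Δ ≤ b := by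
      by_contra hc
      push_neg at hc
      have h6 : Δ * (b + 1) ≤ Δ * ((k₀ + Δ - 1) / Δ) := Nat.mul_le_mul_left Δ hc
      rw [← hm] at h6
      omega
    have hmn : m ≤ n := by
      have h7 : Δ * ((k₀ + Δ - 1) / Δ) ≤ Δ * b := Nat.mul_le_mul_left Δ hqb
      rw [← hm, ← hb] at h7
      exact h7
    have hstep := tC_le m ⟨_, hm⟩ (by omega) hmn
    have d1 := bd_dist2 (Δ := Δ) hW hA hi1 ihi hi'n hk₀m.1 hm1 hmn
      (by omega) (by omega)
    have d2 := bd_dist2 (Δ := Δ) hW hB hk₀m.1 hm1 hmn hj1 jhi hj'n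
      (by omega) (by omega)
    have e : minplus n hn A B i j = A i k₀ + B k₀ j := hk₀e
    obtain ⟨l1, r1⟩ := abs_le.mp d1
    obtain ⟨l2, r2⟩ := abs_le.mp d2
    linarith
  have hS_ge : minplus n hn A B i j ≤ A i k + B k j := Cle i j k hk1 (by omega)
  have hS'_ge : tC i' j' ≤ A i' k' + B k' j' := tC_le k' hdk hk'1 hk'n
  constructor
  · intro hstrong
    refine abs_le.mpr ⟨by linarith, by linarith⟩
  · intro happrox
    obtain ⟨la, ra⟩ := abs_le.mp happrox
    refine abs_le.mpr ⟨by linarith, by linarith⟩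
end

section
/- Let A, B be n×n W-bounded-difference integer matrices, let Δ ≥ 1 divide n, and let tildeC be an n×n integer matrix that is constant on Δ-blocks, i.e., tildeC_{i,j} = tildeC_{r(i),r(j)} for all i,j, where r(i) is the unique multiple of Δ with i ∈ I(r(i)). For each round r in a finite sequence of rounds with fixed indices i^r, j^r ∈ {1,…,n}, define A^r_{i,k} := A_{i,k} + B_{k,j^r} − tildeC_{i,j^r} and B^r_{k,j} := B_{k,j} − B_{k,j^r} + tildeC_{i^r,j^r} − tildeC_{i^r,j}. Then for all i', k', j' divisible by Δ, all (i,k,j) ∈ I(i') × I(k') × I(j'), and every round r: |A^r_{i,k} − A^r_{i',k'}| ≤ 4ΔW and |B^r_{k,j} − B^r_{k',j'}| ≤ 4ΔW. Consequently, if for all rounds r one has |A^r_{i,k}| > 48ΔW or |B^r_{k,j}| > 48ΔW (strongly uncovered), then for all rounds r one has |A^r_{i',k'}| > 44ΔW or |B^r_{k',j'}| > 44ΔW (approximately uncovered); and if the latter holds, then for all rounds r one has |A^r_{i,k}| > 40ΔW or |B^r_{k,j}| > 40ΔW (weakly uncovered). -/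
lemma col_bound {n : ℕ} {W : ℤ} {X : ℕ → ℕ → ℤ} (hX : BoundedDiff n W X)
    (i : ℕ) (hi1 : 1 ≤ i) (hi2 : i ≤ n) (k : ℕ) (hk1 : 1 ≤ k) :
    ∀ k', k ≤ k' → k' ≤ n → |X i k - X i k'| ≤ ((k' - k : ℕ) : ℤ) * W := by
  intro k' hkk'
  induction k', hkk' using Nat.le_induction with
  | base => intro _; simp
  | succ m hm ih =>
    intro hmn
    have h1 := ih (by omega)
    have h2 := hX.1 i m hi1 hi2 (by omega) (by omega)
    have h3 : |X i k - X i (m+1)| ≤ |X i k - X i m| + |X i m - X i (m+1)| := by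
      calc |X i k - X i (m+1)| = |(X i k - X i m) + (X i m - X i (m+1))| := by ring_nf
        _ ≤ _ := abs_add_le _ _
    have hc : ((m + 1 - k : ℕ) : ℤ) = ((m - k : ℕ) : ℤ) + 1 := by omega
    rw [hc]; linarith

lemma row_bound {n : ℕ} {W : ℤ} {X : ℕ → ℕ → ℤ} (hX : BoundedDiff n W X)
    (k : ℕ) (hk1 : 1 ≤ k) (hk2 : k ≤ n) (i : ℕ) (hi1 : 1 ≤ i) :
    ∀ i', i ≤ i' → i' ≤ n → |X i k - X i' k| ≤ ((i' - i : ℕ) : ℤ) * W := by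
  intro i' hii'
  induction i', hii' using Nat.le_induction with
  | base => intro _; simp
  | succ m hm ih =>
    intro hmn
    have h1 := ih (by omega)
    have h2 := hX.2 m k (by omega) (by omega) hk1 hk2
    have h3 : |X i k - X (m+1) k| ≤ |X i k - X m k| + |X m k - X (m+1) k| := by
      calc |X i k - X (m+1) k| = |(X i k - X m k) + (X m k - X (m+1) k)| := by ring_nf
        _ ≤ _ := abs_add_le _ _
    have hc : ((m + 1 - i : ℕ) : ℤ) = ((m - i : ℕ) : ℤ) + 1 := by omega
    rw [hc]; linarith

lemma dist_bound {n : ℕ} {W : ℤ} {X : ℕ → ℕ → ℤ} (hX : BoundedDiff n W X)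
    {i i' k k' : ℕ} (hi1 : 1 ≤ i) (hii' : i ≤ i') (hi'n : i' ≤ n)
    (hk1 : 1 ≤ k) (hkk' : k ≤ k') (hk'n : k' ≤ n) :
    |X i k - X i' k'| ≤ (((i' - i : ℕ) : ℤ) + ((k' - k : ℕ) : ℤ)) * W := by
  have h1 := row_bound hX k hk1 (by omega) i hi1 i' hii' hi'n
  have h2 := col_bound hX i' (by omega) hi'n k hk1 k' hkk' hk'n
  calc |X i k - X i' k'| = |(X i k - X i' k) + (X i' k - X i' k')| := by ring_nf
    _ ≤ |X i k - X i' k| + |X i' k - X i' k'| := abs_add_le _ _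
    _ ≤ _ := by linarith

lemma block_eq {Δ a b i : ℕ} (ha : Δ ∣ a) (hb : Δ ∣ b)
    (h1 : a - Δ < i) (h2 : i ≤ a) (h3 : b - Δ < i) (h4 : i ≤ b) : a = b := by
  obtain ⟨p, rfl⟩ := ha; obtain ⟨q, rfl⟩ := hb
  have hΔ : 0 < Δ := by
    rcases Nat.eq_zero_or_pos Δ with h | h
    · omega
    · exact h
  have hpq : p < q + 1 := Nat.lt_of_mul_lt_mul_left (a := Δ)
    (by calc Δ * p < i + Δ := by omega
          _ ≤ Δ * q + Δ := by omega
          _ = Δ * (q + 1) := by ring)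
  have hqp : q < p + 1 := Nat.lt_of_mul_lt_mul_left (a := Δ)
    (by calc Δ * q < i + Δ := by omega
          _ ≤ Δ * p + Δ := by omega
          _ = Δ * (p + 1) := by ring)
  have hpq2 : p = q := by omega
  rw [hpq2]

/-- For `W`-BD matrices `A, B`, `Δ ∣ n`, a matrix `tildeC` constant on `Δ`-blocks
(`tildeC_{i,j} = tildeC_{r(i),r(j)}` with `r(i)` the unique multiple of `Δ` with
`i ∈ I(r(i))`), and perturbed matrices `Aᵗ, Bᵗ` over rounds `t ∈ {1,…,ρ}` with indices
`iᵗ, jᵗ ∈ {1,…,n}`: for all block corners `i', k', j'` (multiples of `Δ` in `[1,n]`),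
all `(i,k,j) ∈ I(i') × I(k') × I(j')`, and every round `t`,
`|Aᵗ_{i,k} - Aᵗ_{i',k'}| ≤ 4ΔW` and `|Bᵗ_{k,j} - Bᵗ_{k',j'}| ≤ 4ΔW`.
Consequently strongly uncovered implies approximately uncovered, and approximately
uncovered implies weakly uncovered. -/
theorem uncovered_relations (n Δ : ℕ) (hn : 1 ≤ n) (hΔ : 1 ≤ Δ) (hdvd : Δ ∣ n)
    (W : ℤ) (hW : 0 ≤ W) (A B : ℕ → ℕ → ℤ)
    (hA : BoundedDiff n W A) (hB : BoundedDiff n W B)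
    (r : ℕ → ℕ)
    (hr : ∀ i, 1 ≤ i → i ≤ n → Δ ∣ r i ∧ r i - Δ < i ∧ i ≤ r i ∧ r i ≤ n)
    (tC : ℕ → ℕ → ℤ)
    (htCblock : ∀ i j, 1 ≤ i → i ≤ n → 1 ≤ j → j ≤ n → tC i j = tC (r i) (r j))
    (ρ : ℕ) (ir jr : ℕ → ℕ)
    (hij : ∀ t, t ∈ Finset.Icc 1 ρ → (1 ≤ ir t ∧ ir t ≤ n) ∧ (1 ≤ jr t ∧ jr t ≤ n))
    (Ar Br : ℕ → ℕ → ℕ → ℤ)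
    (hAr : ∀ t, t ∈ Finset.Icc 1 ρ → ∀ i k, Ar t i k = A i k + B k (jr t) - tC i (jr t))
    (hBr : ∀ t, t ∈ Finset.Icc 1 ρ → ∀ k j,
      Br t k j = B k j - B k (jr t) + tC (ir t) (jr t) - tC (ir t) j) :
    ∀ i' k' j', Δ ∣ i' → Δ ∣ k' → Δ ∣ j' →
      1 ≤ i' → i' ≤ n → 1 ≤ k' → k' ≤ n → 1 ≤ j' → j' ≤ n →
      ∀ i k j, i' - Δ < i → i ≤ i' → k' - Δ < k → k ≤ k' → j' - Δ < j → j ≤ j' →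
        (∀ t, t ∈ Finset.Icc 1 ρ →
          |Ar t i k - Ar t i' k'| ≤ 4 * (Δ : ℤ) * W ∧
          |Br t k j - Br t k' j'| ≤ 4 * (Δ : ℤ) * W) ∧
        ((∀ t, t ∈ Finset.Icc 1 ρ →
            48 * (Δ : ℤ) * W < |Ar t i k| ∨ 48 * (Δ : ℤ) * W < |Br t k j|) →
          (∀ t, t ∈ Finset.Icc 1 ρ →
            44 * (Δ : ℤ) * W < |Ar t i' k'| ∨ 44 * (Δ : ℤ) * W < |Br t k' j'|)) ∧
        ((∀ t, t ∈ Finset.Icc 1 ρ →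
            44 * (Δ : ℤ) * W < |Ar t i' k'| ∨ 44 * (Δ : ℤ) * W < |Br t k' j'|) →
          (∀ t, t ∈ Finset.Icc 1 ρ →
            40 * (Δ : ℤ) * W < |Ar t i k| ∨ 40 * (Δ : ℤ) * W < |Br t k j|)) := by

  intro i' k' j' hdi hdk hdj hi'1 hi'n hk'1 hk'n hj'1 hj'n
  intro i k j hii1 hii2 hkk1 hkk2 hjj1 hjj2
  have hi1 : 1 ≤ i := by omega
  have hk1 : 1 ≤ k := by omega
  have hj1 : 1 ≤ j := by omega
  have hin : i ≤ n := le_trans hii2 hi'n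
  have hkn : k ≤ n := le_trans hkk2 hk'n
  have hjn : j ≤ n := le_trans hjj2 hj'n
  obtain ⟨hri1, hri2, hri3, hri4⟩ := hr i hi1 hin
  obtain ⟨hrk1, hrk2, hrk3, hrk4⟩ := hr k hk1 hkn
  obtain ⟨hrj1, hrj2, hrj3, hrj4⟩ := hr j hj1 hjn
  obtain ⟨hri'1, hri'2, hri'3, hri'4⟩ := hr i' hi'1 hi'n
  obtain ⟨hrj'1, hrj'2, hrj'3, hrj'4⟩ := hr j' hj'1 hj'n
  have hrieq : r i = i' := block_eq hri1 hdi hri2 hri3 hii1 hii2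
  have hri'eq : r i' = i' := block_eq hri'1 hdi hri'2 hri'3 (by omega) le_rfl
  have hrjeq : r j = j' := block_eq hrj1 hdj hrj2 hrj3 hjj1 hjj2
  have hrj'eq : r j' = j' := block_eq hrj'1 hdj hrj'2 hrj'3 (by omega) le_rfl
  have hmain : ∀ t, t ∈ Finset.Icc 1 ρ →
      |Ar t i k - Ar t i' k'| ≤ 4 * (Δ : ℤ) * W ∧
      |Br t k j - Br t k' j'| ≤ 4 * (Δ : ℤ) * W := by
    intro t ht
    obtain ⟨⟨hir1, hir2⟩, hjr1, hjr2⟩ := hij t ht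
    have tCeq1 : tC i (jr t) = tC i' (jr t) := by
      rw [htCblock i (jr t) hi1 hin hjr1 hjr2,
          htCblock i' (jr t) hi'1 hi'n hjr1 hjr2, hrieq, hri'eq]
    have tCeq2 : tC (ir t) j = tC (ir t) j' := by
      rw [htCblock (ir t) j hir1 hir2 hj1 hjn,
          htCblock (ir t) j' hir1 hir2 hj'1 hj'n, hrjeq, hrj'eq]
    have hcA : Ar t i k - Ar t i' k' =
        (A i k - A i' k') + (B k (jr t) - B k' (jr t)) := by
      rw [hAr t ht i k, hAr t ht i' k', tCeq1]; ring
    have hcB : Br t k j - Br t k' j' =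
        (B k j - B k' j') - (B k (jr t) - B k' (jr t)) := by
      rw [hBr t ht k j, hBr t ht k' j', tCeq2]; ring
    have hA1 := dist_bound hA hi1 hii2 hi'n hk1 hkk2 hk'n
    have hB1 := row_bound hB (jr t) hjr1 hjr2 k hk1 k' hkk2 hk'n
    have hB2 := dist_bound hB hk1 hkk2 hk'n hj1 hjj2 hj'n
    have ci : ((i' - i : ℕ) : ℤ) ≤ (Δ : ℤ) - 1 := by omega
    have ck : ((k' - k : ℕ) : ℤ) ≤ (Δ : ℤ) - 1 := by omega
    have cj : ((j' - j : ℕ) : ℤ) ≤ (Δ : ℤ) - 1 := by omega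
    have ci0 : (0 : ℤ) ≤ ((i' - i : ℕ) : ℤ) := Int.natCast_nonneg _
    have ck0 : (0 : ℤ) ≤ ((k' - k : ℕ) : ℤ) := Int.natCast_nonneg _
    have cj0 : (0 : ℤ) ≤ ((j' - j : ℕ) : ℤ) := Int.natCast_nonneg _
    have hΔ1 : (1 : ℤ) ≤ (Δ : ℤ) := by exact_mod_cast hΔ
    constructor
    · rw [hcA]
      calc |(A i k - A i' k') + (B k (jr t) - B k' (jr t))|
          ≤ |A i k - A i' k'| + |B k (jr t) - B k' (jr t)| := abs_add_le _ _
        _ ≤ (((i' - i : ℕ) : ℤ) + 2 * ((k' - k : ℕ) : ℤ)) * W := by linarith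
        _ ≤ (4 * (Δ : ℤ)) * W := mul_le_mul_of_nonneg_right (by linarith) hW
        _ = 4 * (Δ : ℤ) * W := by ring
    · rw [hcB]
      calc |(B k j - B k' j') - (B k (jr t) - B k' (jr t))|
          ≤ |B k j - B k' j'| + |B k (jr t) - B k' (jr t)| := abs_sub _ _
        _ ≤ (2 * ((k' - k : ℕ) : ℤ) + ((j' - j : ℕ) : ℤ)) * W := by linarith
        _ ≤ (4 * (Δ : ℤ)) * W := mul_le_mul_of_nonneg_right (by linarith) hW
        _ = 4 * (Δ : ℤ) * W := by ring
  refine ⟨hmain, ?_, ?_⟩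
  · intro hs t ht
    obtain ⟨hA4, hB4⟩ := hmain t ht
    rcases hs t ht with h | h
    · left
      have := abs_sub_abs_le_abs_sub (Ar t i k) (Ar t i' k')
      linarith
    · right
      have := abs_sub_abs_le_abs_sub (Br t k j) (Br t k' j')
      linarith
  · intro hs t ht
    obtain ⟨hA4, hB4⟩ := hmain t ht
    rcases hs t ht with h | h
    · left
      have := abs_sub_abs_le_abs_sub (Ar t i' k') (Ar t i k)
      have habs : |Ar t i' k' - Ar t i k| = |Ar t i k - Ar t i' k'| := abs_sub_comm _ _
      linarith
    · right
      have := abs_sub_abs_le_abs_sub (Br t k' j') (Br t k j)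
      have habs : |Br t k' j' - Br t k j| = |Br t k j - Br t k' j'| := abs_sub_comm _ _
      linarith
end
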